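/- Let Γ be a locally finite graph and (v_n) a sequence of vertices with degrees d_n = d(v_n) → ∞. Suppose for some k ∈ ℕ, s_n^k denotes the number of neighbors w of v_n with d(w) ≤ k, and limsup_n s_n^k / d_n > 0. Then for sufficiently small ε > 0 there do not exist r ∈ ℕ and an operator B with at most r nonzero entries per row and column such that ‖L − B‖ < ε; in particular L is not in the norm closure of ∪_d 𝔹^{(d)}. -/

import Mathlib

/-- The matrix entry of the normalized Laplacian of a locally finite graph. -/
noncomputable def lapEntry {V : Type*} (G : SimpleGraph V)
    [DecidableEq V] [DecidableRel G.Adj] [G.LocallyFinite] (v w : V) : ℝ :=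
  if w = v then 1
  else if G.Adj v w then -(1 / Real.sqrt ((G.degree v : ℝ) * (G.degree w : ℝ)))
  else 0

/-- A bounded operator on `ℓ²(V)` whose matrix has at most `r` nonzero
entries in each row and each column. -/
def Sparse {V : Type*} [DecidableEq V]
    (r : ℕ) (B : lp (fun _ : V => ℂ) 2 →L[ℂ] lp (fun _ : V => ℂ) 2) : Prop :=
  (∀ v : V, {u : V | (B (lp.single 2 v 1)) u ≠ 0}.encard ≤ r) ∧
  (∀ u : V, {v : V | (B (lp.single 2 v 1)) u ≠ 0}.encard ≤ r)

set_option maxHeartbeats 1000000 in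
open Filter ENNReal in
/-- If the degrees `d(v_n)` tend to infinity while the proportion of neighbors
of `v_n` of degree at most `k` stays bounded away from `0`, then the normalized
Laplacian cannot be approximated in norm by sparse operators; in particular it
is not in the norm closure of `⋃_d 𝔹^{(d)}`. -/
theorem stmt_16 {V : Type*} (G : SimpleGraph V)
    [DecidableEq V] [DecidableRel G.Adj] [G.LocallyFinite] [Countable V]
    (L : lp (fun _ : V => ℂ) 2 →L[ℂ] lp (fun _ : V => ℂ) 2)
    (hL : ∀ v w : V, (L (lp.single 2 w 1)) v = (lapEntry G v w : ℂ))
    (v : ℕ → V)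
    (hdeg : Filter.Tendsto (fun n => G.degree (v n)) Filter.atTop Filter.atTop)
    (k : ℕ)
    (hs : 0 < Filter.limsup (fun n =>
        (((G.neighborFinset (v n)).filter (fun w => G.degree w ≤ k)).card : ℝ)
          / (G.degree (v n) : ℝ)) Filter.atTop) :
    (∃ ε > (0 : ℝ), ¬ ∃ (r : ℕ) (B : lp (fun _ : V => ℂ) 2 →L[ℂ] lp (fun _ : V => ℂ) 2),
        Sparse r B ∧ ‖L - B‖ < ε) ∧
    L ∉ closure {B : lp (fun _ : V => ℂ) 2 →L[ℂ] lp (fun _ : V => ℂ) 2 | ∃ r, Sparse r B} := by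
  classical
  set c := Filter.limsup (fun n =>
        (((G.neighborFinset (v n)).filter (fun w => G.degree w ≤ k)).card : ℝ)
          / (G.degree (v n) : ℝ)) Filter.atTop with hc
  set K : ℝ := (k : ℝ) + 1 with hK
  have hKpos : 0 < K := by positivity
  have key : ∀ (r : ℕ) (B : lp (fun _ : V => ℂ) 2 →L[ℂ] lp (fun _ : V => ℂ) 2),
      Sparse r B → ¬ (‖L - B‖ < Real.sqrt (c / (4 * K))) := by
    intro r B hB hnorm
    -- frequently the proportion is large
    have hfreq : ∃ᶠ n in atTop, c/2 <
        (((G.neighborFinset (v n)).filter (fun w => G.degree w ≤ k)).card : ℝ)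
            / (G.degree (v n) : ℝ) := by
      apply Filter.frequently_lt_of_lt_limsup
      · exact Filter.isCoboundedUnder_le_of_le _ (x := 0) (fun n => by positivity)
      · linarith
    -- eventually the degree is large
    have hev : ∀ᶠ n in atTop, 4 * (r : ℝ) / c < (G.degree (v n) : ℝ) := by
      filter_upwards [hdeg.eventually_ge_atTop (⌈4 * (r : ℝ) / c⌉₊ + 1)] with n hn
      have h1 : (4 * (r : ℝ) / c) ≤ (⌈4 * (r : ℝ) / c⌉₊ : ℝ) := Nat.le_ceil _
      have h2 : ((⌈4 * (r : ℝ) / c⌉₊ + 1 : ℕ) : ℝ) ≤ (G.degree (v n) : ℝ) := by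
        exact_mod_cast hn
      push_cast at h2
      linarith
    obtain ⟨n, hn1, hn2⟩ := (hfreq.and_eventually hev).exists
    set d := G.degree (v n) with hdd
    set D : ℝ := (d : ℝ) with hD
    have hDpos : 0 < D := by
      rcases Nat.eq_zero_or_pos d with h | h
      · exfalso
        rw [hD, h] at hn1
        simp at hn1
        linarith
      · rw [hD]
        exact_mod_cast h
    set δ : lp (fun _ : V => ℂ) 2 := lp.single 2 (v n) 1 with hδ
    set f : lp (fun _ : V => ℂ) 2 := (L - B) δ with hf
    have hfapp : ∀ u : V, f u = (L δ) u - (B δ) u := by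
      intro u
      rw [hf, ContinuousLinearMap.sub_apply, lp.coeFn_sub, Pi.sub_apply]
    -- the set of nonzero columns of B
    have hZ := hB.1 (v n)
    rw [Set.encard_le_coe_iff_finite_ncard_le] at hZ
    obtain ⟨hZfin, hZcard⟩ := hZ
    set Zf : Finset V := hZfin.toFinset with hZf
    have hZfcard : Zf.card ≤ r := by
      rwa [hZf, ← Set.ncard_eq_toFinset_card _ hZfin]
    -- the good set T
    set T : Finset V := (G.neighborFinset (v n)).filter
        (fun w => G.degree w ≤ k ∧ (B δ) w = 0) with hT
    -- cardinality bound
    have hcard : (((G.neighborFinset (v n)).filter (fun w => G.degree w ≤ k)).card : ℝ)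
        ≤ (T.card : ℝ) + r := by
      have hsub : (G.neighborFinset (v n)).filter (fun w => G.degree w ≤ k) ⊆ T ∪ Zf := by
        intro w hw
        rw [Finset.mem_filter] at hw
        by_cases h0 : (B δ) w = 0
        · exact Finset.mem_union_left _ (Finset.mem_filter.mpr ⟨hw.1, hw.2, h0⟩)
        · exact Finset.mem_union_right _ (hZfin.mem_toFinset.mpr h0)
      have := (Finset.card_le_card hsub).trans (Finset.card_union_le _ _)
      have := this.trans (Nat.add_le_add_left hZfcard _)
      exact_mod_cast this
    -- pointwise lower bound on T
    have hterm : ∀ u ∈ T, 1 / (K * D) ≤ ‖f u‖ ^ 2 := by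
      intro u hu
      rw [hT, Finset.mem_filter] at hu
      obtain ⟨hu1, hu2, hu3⟩ := hu
      have hadj : G.Adj (v n) u := (SimpleGraph.mem_neighborFinset _ _ _).mp hu1
      have hne : ¬ (v n = u) := fun h => (G.ne_of_adj hadj) h
      have hdu : 0 < G.degree u :=
        (SimpleGraph.degree_pos_iff_exists_adj _ _).mpr ⟨v n, hadj.symm⟩
      set du : ℝ := (G.degree u : ℝ) with hdu'
      have hdupos : 0 < du := by rw [hdu']; exact_mod_cast hdu
      have hfu : f u = ((-(1 / Real.sqrt (du * D)) : ℝ) : ℂ) := by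
        rw [hfapp u, hu3, sub_zero, hL u (v n), lapEntry, if_neg hne,
          if_pos hadj.symm]
      have hnorm : ‖f u‖ = 1 / Real.sqrt (du * D) := by
        rw [hfu, Complex.norm_real, Real.norm_eq_abs, abs_neg,
          abs_of_nonneg (by positivity)]
      rw [hnorm]
      have hsq : (1 / Real.sqrt (du * D)) ^ 2 = 1 / (du * D) := by
        rw [div_pow, one_pow, Real.sq_sqrt (by positivity)]
      rw [hsq]
      apply one_div_le_one_div_of_le (by positivity)
      have hduK : du ≤ K := by
        rw [hK, hdu']
        have : (G.degree u : ℝ) ≤ (k : ℝ) := by exact_mod_cast hu2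
        linarith
      nlinarith
    -- sum lower bound
    have hsumlow : (T.card : ℝ) * (1 / (K * D)) ≤ ∑ u ∈ T, ‖f u‖ ^ 2 := by
      have := Finset.card_nsmul_le_sum T (fun u => ‖f u‖ ^ 2) (1 / (K * D)) hterm
      simpa [nsmul_eq_mul] using this
    -- sum upper bound
    have hsumup : ∑ u ∈ T, ‖f u‖ ^ 2 ≤ ‖f‖ ^ 2 := by
      have h2 : (0:ℝ) < (2 : ℝ≥0∞).toReal := by norm_num
      have := lp.sum_rpow_le_norm_rpow h2 f T
      have e : (2 : ℝ≥0∞).toReal = ((2:ℕ) : ℝ) := by norm_num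
      rw [e] at this
      simpa [Real.rpow_natCast] using this
    -- norm bound
    have hδnorm : ‖δ‖ = 1 := by
      rw [hδ]
      have h := lp.norm_single (p := 2) (E := fun _ : V => ℂ) (by norm_num)
        (v n) (1 : ℂ)
      rw [norm_one] at h
      exact h
    have hfle : ‖f‖ ≤ ‖L - B‖ := by
      calc ‖f‖ ≤ ‖L - B‖ * ‖δ‖ := (L - B).le_opNorm δ
        _ = ‖L - B‖ := by rw [hδnorm, mul_one]
    have hflt : ‖f‖ < Real.sqrt (c / (4 * K)) := lt_of_le_of_lt hfle hnorm
    have hfsq : ‖f‖ ^ 2 < c / (4 * K) := by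
      have := pow_lt_pow_left₀ hflt (norm_nonneg f) (n := 2) (by norm_num)
      rwa [Real.sq_sqrt (by positivity)] at this
    -- combine
    have h1 : (T.card : ℝ) * (1 / (K * D)) < c / (4 * K) := by
      calc (T.card : ℝ) * (1 / (K * D)) ≤ ∑ u ∈ T, ‖f u‖ ^ 2 := hsumlow
        _ ≤ ‖f‖ ^ 2 := hsumup
        _ < c / (4 * K) := hfsq
    have hTc : (T.card : ℝ) < c * D / 4 := by
      have h2 := mul_lt_mul_of_pos_right h1 (mul_pos hKpos hDpos)
      have e1 : (T.card : ℝ) * (1 / (K * D)) * (K * D) = T.card := by field_simp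
      have e2 : c / (4 * K) * (K * D) = c * D / 4 := by field_simp
      rw [e1, e2] at h2
      exact h2
    have hr : (r : ℝ) < c * D / 4 := by
      rw [div_lt_iff₀ hs] at hn2
      linarith
    have hs2 : c * D / 2 < (((G.neighborFinset (v n)).filter
        (fun w => G.degree w ≤ k)).card : ℝ) := by
      rw [lt_div_iff₀ hDpos] at hn1
      linarith
    linarith
  have hε : (0:ℝ) < Real.sqrt (c / (4 * K)) := Real.sqrt_pos.mpr (by positivity)
  constructor
  · exact ⟨Real.sqrt (c / (4 * K)), hε, fun ⟨r, B, hB, hn⟩ => key r B hB hn⟩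
  · intro hcl
    rw [Metric.mem_closure_iff] at hcl
    obtain ⟨B, ⟨r, hB⟩, hd⟩ := hcl _ hε
    rw [dist_eq_norm] at hd
    exact key r B hB hd
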